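/- arXiv:1806.02526 — 2 statements merged into one kernel-verified Lean document; each statement's English description precedes it below -/
import Mathlib

section
/- Let k be a field, G a group, M an additive commutative group, and let ρ_B : Representation k G B and ρ_W : Representation k G W be linear representations. Suppose (B_u)_{u∈M} is an internal direct sum decomposition of B by subspaces each of which is stable under the G-action on B. Consider the tensor product representation of G on B ⊗_k W. Then the invariants satisfy (B ⊗ W)^G = ⨆_{u∈M} ( T(B_u, W) ⊓ (B ⊗ W)^G ). -/
open TensorProduct DirectSum

/-- The image of `P ⊗ Q` in `B ⊗[k] W`: the span of elementary tensors `p ⊗ q`. -/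
noncomputable def tensorSpan (k : Type*) [Field k] {B W : Type*} [AddCommGroup B] [Module k B]
    [AddCommGroup W] [Module k W] (P : Submodule k B) (Q : Submodule k W) :
    Submodule k (B ⊗[k] W) :=
  Submodule.map₂ (TensorProduct.mk k B W) P Q

/-- If `B = ⨁_{u ∈ M} B_u` is an internal direct-sum decomposition by `G`-stable subspaces,
then the invariants of the tensor product representation on `B ⊗ W` decompose as
`(B ⊗ W)^G = ⨆_u (T(B_u, W) ⊓ (B ⊗ W)^G)`. -/
theorem tensor_invariants_eq_iSup_inf
    (k : Type*) [Field k] (G : Type*) [Group G]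
    (M : Type*) [AddCommGroup M]
    (B W : Type*) [AddCommGroup B] [Module k B] [AddCommGroup W] [Module k W]
    (ρB : Representation k G B) (ρW : Representation k G W)
    (Bfam : M → Submodule k B)
    (hstable : ∀ (u : M) (g : G), ∀ x ∈ Bfam u, ρB g x ∈ Bfam u)
    (hindep : iSupIndep Bfam) (htop : (⨆ u, Bfam u) = ⊤) :
    (ρB.tprod ρW).invariants =
      ⨆ u : M, (tensorSpan k (Bfam u) (⊤ : Submodule k W) ⊓ (ρB.tprod ρW).invariants) := by
  classical
  have hInternal : DirectSum.IsInternal Bfam :=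
    DirectSum.isInternal_submodule_of_iSupIndep_of_iSup_eq_top hindep htop
  set e : (⨁ u, Bfam u) ≃ₗ[k] B :=
    LinearEquiv.ofBijective (DirectSum.coeLinearMap Bfam) hInternal with he
  -- the projection onto the `u`-component
  set π : M → (B →ₗ[k] B) := fun u =>
    (Bfam u).subtype ∘ₗ (DFinsupp.lapply u) ∘ₗ e.symm.toLinearMap with hπdef
  have hπapply : ∀ u (b : B), π u b = ((e.symm b) u : B) := fun u b => rfl
  -- value of the projection on elements of the pieces
  have hπ : ∀ (v : M) (x : B), x ∈ Bfam v → ∀ u, π u x = if u = v then x else 0 := by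
    intro v x hx u
    by_cases h : u = v
    · subst h
      rw [hπapply, hInternal.ofBijective_coeLinearMap_of_mem hx]
      simp
    · rw [hπapply, hInternal.ofBijective_coeLinearMap_of_mem_ne (Ne.symm h) hx]
      simp [h]
  -- projections commute with the G-action
  have hcomm : ∀ (g : G) (u : M) (x : B), π u (ρB g x) = ρB g (π u x) := by
    intro g u x
    have hx : x ∈ ⨆ v, Bfam v := htop ▸ Submodule.mem_top
    refine Submodule.iSup_induction (motive := fun x => π u (ρB g x) = ρB g (π u x)) Bfam hx ?_ ?_ ?_
    · intro v y hy
      rw [hπ v y hy u, hπ v (ρB g y) (hstable v g y hy) u]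
      by_cases h : u = v <;> simp [h]
    · simp
    · intro a b ha hb
      simp [map_add, ha, hb]
  -- every element of B is the (finite) sum of its projections
  have hsumB : ∀ b : B, ∃ S : Finset M, (∀ u ∉ S, π u b = 0) ∧ (∑ u ∈ S, π u b) = b := by
    intro b
    refine ⟨(e.symm b).support, ?_, ?_⟩
    · intro u hu
      rw [hπapply]
      simp [DFinsupp.notMem_support_iff.mp hu]
    · have := DirectSum.sum_support_of (e.symm b)
      calc (∑ u ∈ (e.symm b).support, π u b)
          = ∑ u ∈ (e.symm b).support, e (DirectSum.of (fun v => Bfam v) u ((e.symm b) u)) := by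
            refine Finset.sum_congr rfl fun u _ => ?_
            rw [hπapply]
            show _ = DirectSum.coeLinearMap Bfam (DirectSum.of (fun v => Bfam v) u ((e.symm b) u))
            rw [DirectSum.coeLinearMap_of]
        _ = e (∑ u ∈ (e.symm b).support, DirectSum.of (fun v => Bfam v) u ((e.symm b) u)) :=
            (map_sum (e : (⨁ u, Bfam u) →ₗ[k] B) _ _).symm
        _ = b := by rw [this, LinearEquiv.apply_symm_apply]
  -- projections on the tensor product
  set P : M → (B ⊗[k] W →ₗ[k] B ⊗[k] W) := fun u => LinearMap.rTensor W (π u) with hPdef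
  have hPmem : ∀ u (x : B ⊗[k] W), P u x ∈ tensorSpan k (Bfam u) (⊤ : Submodule k W) := by
    intro u x
    induction x with
    | zero => simp
    | tmul b w =>
        have : P u (b ⊗ₜ[k] w) = (π u b) ⊗ₜ[k] w := rfl
        rw [this]
        have hb : π u b ∈ Bfam u := by rw [hπapply]; exact ((e.symm b) u).2
        exact Submodule.apply_mem_map₂ _ hb trivial
    | add x y hx hy => rw [map_add]; exact Submodule.add_mem _ hx hy
  have hPcomm : ∀ (g : G) (u : M) (x : B ⊗[k] W),
      P u ((ρB.tprod ρW) g x) = (ρB.tprod ρW) g (P u x) := by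
    intro g u x
    induction x with
    | zero => simp
    | tmul b w =>
        show (π u (ρB g b)) ⊗ₜ[k] (ρW g w) = (ρB g (π u b)) ⊗ₜ[k] (ρW g w)
        rw [hcomm]
    | add x y hx hy => simp only [map_add, hx, hy]
  have hsumP : ∀ x : B ⊗[k] W,
      ∃ S : Finset M, (∀ u ∉ S, P u x = 0) ∧ (∑ u ∈ S, P u x) = x := by
    intro x
    induction x with
    | zero => exact ⟨∅, fun u _ => by simp, by simp⟩
    | tmul b w =>
        obtain ⟨S, h0, hsum⟩ := hsumB b
        refine ⟨S, fun u hu => ?_, ?_⟩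
        · show (π u b) ⊗ₜ[k] w = 0
          rw [h0 u hu, TensorProduct.zero_tmul]
        · have : ∀ u, P u (b ⊗ₜ[k] w) = (π u b) ⊗ₜ[k] w := fun u => rfl
          simp only [this, ← TensorProduct.sum_tmul, hsum]
    | add x y hx hy =>
        obtain ⟨S₁, h₁0, h₁⟩ := hx
        obtain ⟨S₂, h₂0, h₂⟩ := hy
        refine ⟨S₁ ∪ S₂, fun u hu => ?_, ?_⟩
        · rw [map_add, h₁0 u fun h => hu (Finset.mem_union_left _ h),
            h₂0 u fun h => hu (Finset.mem_union_right _ h), add_zero]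
        · have e₁ : (∑ u ∈ S₁ ∪ S₂, P u x) = ∑ u ∈ S₁, P u x :=
            (Finset.sum_subset Finset.subset_union_left
              (fun u _ hu => h₁0 u hu)).symm
          have e₂ : (∑ u ∈ S₁ ∪ S₂, P u y) = ∑ u ∈ S₂, P u y :=
            (Finset.sum_subset Finset.subset_union_right
              (fun u _ hu => h₂0 u hu)).symm
          simp only [map_add, Finset.sum_add_distrib, e₁, e₂, h₁, h₂]
  apply le_antisymm
  · intro x hx
    obtain ⟨S, -, hsum⟩ := hsumP x
    rw [← hsum]
    refine Submodule.sum_mem _ fun u _ => Submodule.mem_iSup_of_mem u ?_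
    refine Submodule.mem_inf.mpr ⟨hPmem u x, ?_⟩
    intro g
    rw [← hPcomm g u x, hx g]
  · exact iSup_le fun u => inf_le_right
end

section
/- Let k be a field, G a group, M an additive commutative group, and let ρ_B : Representation k G B and ρ_W : Representation k G W be linear representations. Suppose (B_u)_{u∈M} is an internal direct sum decomposition of B by subspaces each stable under the G-action on B. Let ρ : M →+ ℤ be an additive homomorphism, i ∈ ℤ, and set B^ρ(i) = ⨆_{u : ρ(u) ≥ i} B_u. Then, for the tensor product representation of G on B ⊗_k W, one has T(B^ρ(i), W) ⊓ (B ⊗ W)^G = ⨆_{u : ρ(u) ≥ i} ( T(B_u, W) ⊓ (B ⊗ W)^G ). -/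
open TensorProduct

/-- If `B = ⨁_{u ∈ M} B_u` is an internal direct-sum decomposition by `G`-stable subspaces,
`ρ : M →+ ℤ` and `B^ρ(i) = ⨆_{ρ u ≥ i} B_u`, then for the tensor product representation on
`B ⊗ W` one has `T(B^ρ(i), W) ⊓ (B ⊗ W)^G = ⨆_{ρ u ≥ i} (T(B_u, W) ⊓ (B ⊗ W)^G)`. -/
theorem tensor_invariants_filtration_eq
    (k : Type*) [Field k] (G : Type*) [Group G]
    (M : Type*) [AddCommGroup M]
    (B W : Type*) [AddCommGroup B] [Module k B] [AddCommGroup W] [Module k W]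
    (ρB : Representation k G B) (ρW : Representation k G W)
    (Bfam : M → Submodule k B)
    (hstable : ∀ (u : M) (g : G), ∀ x ∈ Bfam u, ρB g x ∈ Bfam u)
    (hindep : iSupIndep Bfam) (htop : (⨆ u, Bfam u) = ⊤)
    (ρ : M →+ ℤ) (i : ℤ) :
    tensorSpan k (⨆ (u : M) (_ : ρ u ≥ i), Bfam u) (⊤ : Submodule k W) ⊓
        (ρB.tprod ρW).invariants =
      ⨆ (u : M) (_ : ρ u ≥ i),
        (tensorSpan k (Bfam u) (⊤ : Submodule k W) ⊓ (ρB.tprod ρW).invariants) := by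
  classical
  -- complements
  have hcompl : ∀ u : M, IsCompl (Bfam u) (⨆ v, ⨆ (_ : v ≠ u), Bfam v) := by
    intro u
    refine ⟨hindep u, codisjoint_iff.mpr ?_⟩
    rw [eq_top_iff, ← htop]
    refine iSup_le fun v => ?_
    by_cases h : v = u
    · subst h; exact le_sup_left
    · exact le_trans (le_iSup₂ (f := fun v (_ : v ≠ u) => Bfam v) v h) le_sup_right
  -- projections onto the pieces
  set π : M → (B →ₗ[k] B) := fun u =>
    (Bfam u).subtype ∘ₗ Submodule.linearProjOfIsCompl _ _ (hcompl u) with hπdef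
  have hπ_mem : ∀ u x, π u x ∈ Bfam u := fun u x =>
    (Submodule.linearProjOfIsCompl _ _ (hcompl u) x).2
  have hπ_left : ∀ u, ∀ x ∈ Bfam u, π u x = x := by
    intro u x hx
    have : Submodule.linearProjOfIsCompl _ _ (hcompl u) x = ⟨x, hx⟩ :=
      Submodule.linearProjOfIsCompl_apply_left (hcompl u) ⟨x, hx⟩
    simp [hπdef, this]
  have hπ_right : ∀ u v, v ≠ u → ∀ x ∈ Bfam v, π u x = 0 := by
    intro u v hvu x hx
    have hx' : x ∈ ⨆ v, ⨆ (_ : v ≠ u), Bfam v :=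
      (le_iSup₂ (f := fun v (_ : v ≠ u) => Bfam v) v hvu) hx
    have : Submodule.linearProjOfIsCompl _ _ (hcompl u) x = 0 :=
      Submodule.linearProjOfIsCompl_apply_right' (hcompl u) hx'
    simp [hπdef, this]
  -- projections commute with the `G`-action
  have hπ_comm : ∀ (u : M) (g : G) (x : B), π u (ρB g x) = ρB g (π u x) := by
    intro u g x
    have hx : x ∈ ⨆ v, Bfam v := htop ▸ Submodule.mem_top
    refine Submodule.iSup_induction (motive := fun x => π u (ρB g x) = ρB g (π u x)) Bfam hx
      ?_ ?_ ?_
    · intro v x hxv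
      by_cases h : v = u
      · rw [h] at hxv
        rw [hπ_left u x hxv, hπ_left u _ (hstable u g x hxv)]
      · rw [hπ_right u v h x hxv, hπ_right u v h _ (hstable v g x hxv), map_zero]
    · simp
    · intro a b ha hb
      simp [map_add, ha, hb]
  -- projections on the tensor product
  set P : M → (B ⊗[k] W →ₗ[k] B ⊗[k] W) := fun u =>
    TensorProduct.map (π u) LinearMap.id with hPdef
  have hP_mem : ∀ u x, P u x ∈ tensorSpan k (Bfam u) (⊤ : Submodule k W) := by
    intro u x
    induction x with
    | zero => simp [hPdef]
    | tmul b w =>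
        simpa [hPdef, tensorSpan] using
          Submodule.apply_mem_map₂ (TensorProduct.mk k B W) (hπ_mem u b)
            (Submodule.mem_top (x := w))
    | add a b ha hb => rw [map_add]; exact Submodule.add_mem _ ha hb
  have hP_left : ∀ u, ∀ y ∈ tensorSpan k (Bfam u) (⊤ : Submodule k W), P u y = y := by
    intro u y hy
    have hle : tensorSpan k (Bfam u) (⊤ : Submodule k W) ≤
        LinearMap.ker (P u - LinearMap.id) := by
      rw [tensorSpan, Submodule.map₂_le]
      intro m hm n _
      simp [hPdef, hπ_left u m hm]
    have := hle hy
    rw [LinearMap.mem_ker, LinearMap.sub_apply, sub_eq_zero] at this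
    simpa using this
  have hP_zero : ∀ u v, v ≠ u →
      ∀ y ∈ tensorSpan k (Bfam v) (⊤ : Submodule k W), P u y = 0 := by
    intro u v hvu y hy
    have hle : tensorSpan k (Bfam v) (⊤ : Submodule k W) ≤ LinearMap.ker (P u) := by
      rw [tensorSpan, Submodule.map₂_le]
      intro m hm n _
      simp [hPdef, hπ_right u v hvu m hm]
    exact hle hy
  have hP_comm : ∀ (u : M) (g : G) (x : B ⊗[k] W),
      P u ((ρB.tprod ρW) g x) = (ρB.tprod ρW) g (P u x) := by
    intro u g x
    induction x with
    | zero => simp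
    | tmul b w => simp [hPdef, Representation.tprod_apply, hπ_comm u g b]
    | add a b ha hb =>
        simp only [Representation.tprod_apply] at ha hb
        simp [map_add, Representation.tprod_apply, ha, hb]
  apply le_antisymm
  · rintro x ⟨hx1, hx2⟩
    rw [tensorSpan] at hx1
    simp only [Submodule.map₂_iSup_left] at hx1
    rw [iSup_subtype'] at hx1
    obtain ⟨f, hf, hsum⟩ := (Submodule.mem_iSup_iff_exists_finsupp _ _).mp hx1
    have key : ∀ v : {u : M // ρ u ≥ i}, P v.1 x = f v := by
      intro v
      rw [← hsum, Finsupp.sum, map_sum]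
      have hterm : ∀ w ∈ f.support, P v.1 (f w) = if w = v then f v else 0 := by
        intro w _
        by_cases h : w = v
        · subst h; simp [hP_left w.1 (f w) (hf w)]
        · have hne : w.1 ≠ v.1 := fun he => h (Subtype.ext he)
          simp [h, hP_zero v.1 w.1 hne (f w) (hf w)]
      rw [Finset.sum_congr rfl hterm]
      by_cases hv : v ∈ f.support
      · simp [Finset.sum_ite_eq' f.support v (fun _ => f v), hv]
      · rw [Finset.sum_ite_eq' f.support v (fun _ => f v)]
        simp [hv, Finsupp.notMem_support_iff.mp hv]
    rw [← hsum]
    refine Submodule.sum_mem _ fun v _ => ?_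
    have hfv_inv : f v ∈ (ρB.tprod ρW).invariants := by
      intro g
      rw [← key v, ← hP_comm v.1 g x, hx2 g]
    exact Submodule.mem_iSup_of_mem v.1 (Submodule.mem_iSup_of_mem v.2 ⟨hf v, hfv_inv⟩)
  · refine iSup₂_le fun u hu => inf_le_inf_right _ ?_
    exact Submodule.map₂_le_map₂_left (le_iSup₂ (f := fun u (_ : ρ u ≥ i) => Bfam u) u hu)
end
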